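/- arXiv:2605.00655 — 3 statements merged into one kernel-verified Lean document; each statement's English description precedes it below -/
import Mathlib

section
/- In Fam(Set), for any object X = (X₀, X₁), the exponential of X by φ exists and is isomorphic to (X₀, fun _ => PUnit); concretely, morphisms Z × φ → X correspond naturally (in Z) to morphisms Z → (X₀, fun _ => PUnit). -/
universe u

/-- Objects of `Fam(Set)`: a base type together with a family of fibers. -/
structure Fam : Type (u + 1) where
  base : Type u
  fib : base → Type u

/-- Morphisms of `Fam(Set)`. -/
structure FamHom (X Y : Fam.{u}) : Type u where
  f0 : X.base → Y.base
  f1 : ∀ x, X.fib x → Y.fib (f0 x)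

/-- Identity morphism. -/
def FamHom.id (X : Fam.{u}) : FamHom X X := ⟨fun x => x, fun _ y => y⟩

/-- Composition of morphisms. -/
def FamHom.comp {X Y Z : Fam.{u}} (g : FamHom Y Z) (f : FamHom X Y) : FamHom X Z :=
  ⟨fun x => g.f0 (f.f0 x), fun x y => g.f1 _ (f.f1 x y)⟩

/-- The subterminal object `φ`. -/
def phi : Fam.{u} := ⟨PUnit, fun _ => PEmpty⟩

/-- Binary product in `Fam(Set)`, computed componentwise. -/
def Fam.prod (X Y : Fam.{u}) : Fam.{u} :=
  ⟨X.base × Y.base, fun p => X.fib p.1 × Y.fib p.2⟩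

/-- Functorial action of the product on morphisms. -/
def FamHom.prodMap {X X' Y Y' : Fam.{u}} (f : FamHom X X') (g : FamHom Y Y') :
    FamHom (X.prod Y) (X'.prod Y') :=
  ⟨fun p => (f.f0 p.1, g.f0 p.2), fun p q => (f.f1 p.1 q.1, g.f1 p.2 q.2)⟩

/-- The exponential of `X` by `φ`: `(X₀, fun _ => PUnit)`. -/
def expPhi (X : Fam.{u}) : Fam.{u} := ⟨X.base, fun _ => PUnit⟩

/-- `expPhi X` is the exponential object `φ ⟹ X`: morphisms
`Z × φ → X` correspond to morphisms `Z → expPhi X`, naturally in `Z`. -/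
theorem expPhi_is_exponential (X : Fam.{u}) :
    ∃ e : ∀ Z : Fam.{u}, FamHom (Z.prod phi) X ≃ FamHom Z (expPhi X),
      ∀ (Z W : Fam.{u}) (g : FamHom W Z) (h : FamHom (Z.prod phi) X),
        e W (h.comp (g.prodMap (FamHom.id phi))) = (e Z h).comp g := by
  refine ⟨fun Z =>
    { toFun := fun h => ⟨fun z => h.f0 (z, PUnit.unit), fun _ _ => PUnit.unit⟩
      invFun := fun k => ⟨fun p => k.f0 p.1, fun p q => q.2.elim⟩
      left_inv := fun h => by
        cases h with
        | mk f0 f1 =>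
          beta_reduce
          congr 1
          funext p q
          exact q.2.elim
      right_inv := fun k => rfl }, ?_⟩
  intro Z W g h
  rfl
end

section
/- In Fam(Set), the functor X ↦ (φ → X) (exponentiation by φ, concretely (X₀, X₁) ↦ (X₀, fun _ => PUnit)) has a right adjoint, given by (X₀, X₁) ↦ ((Σ x : X₀, X₁ x), fun _ => PUnit). Hence φ is a tiny object in Fam(Set). -/
universe u

/-- Functorial action of `expPhi`. -/
def expPhiHom {X Y : Fam.{u}} (f : FamHom X Y) : FamHom (expPhi X) (expPhi Y) :=
  ⟨f.f0, fun _ _ => PUnit.unit⟩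

/-- The candidate right adjoint `√`: `(X₀, X₁) ↦ ((Σ x, X₁ x), fun _ => PUnit)`. -/
def sqrtPhi (X : Fam.{u}) : Fam.{u} := ⟨Σ x : X.base, X.fib x, fun _ => PUnit⟩

/-- Functorial action of `√`. -/
def sqrtPhiHom {X Y : Fam.{u}} (f : FamHom X Y) : FamHom (sqrtPhi X) (sqrtPhi Y) :=
  ⟨fun p => ⟨f.f0 p.1, f.f1 p.1 p.2⟩, fun _ _ => PUnit.unit⟩

/-- `(φ → −) ⊣ √`, so `φ` is tiny in `Fam(Set)`: there is a bijection
`Hom(expPhi Z, X) ≃ Hom(Z, √X)` natural in `Z` and `X`. -/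
theorem expPhi_left_adjoint_sqrt :
    ∃ e : ∀ Z X : Fam.{u}, FamHom (expPhi Z) X ≃ FamHom Z (sqrtPhi X),
      (∀ (Z W X : Fam.{u}) (g : FamHom W Z) (h : FamHom (expPhi Z) X),
        e W X (h.comp (expPhiHom g)) = (e Z X h).comp g) ∧
      (∀ (Z X Y : Fam.{u}) (k : FamHom X Y) (h : FamHom (expPhi Z) X),
        e Z Y (k.comp h) = (sqrtPhiHom k).comp (e Z X h)) := by
  refine ⟨fun Z X => {
    toFun := fun h => ⟨fun z => ⟨h.f0 z, h.f1 z PUnit.unit⟩, fun _ _ => PUnit.unit⟩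
    invFun := fun k => ⟨fun z => (k.f0 z).1, fun z _ => (k.f0 z).2⟩
    left_inv := fun h => rfl
    right_inv := fun k => rfl }, fun Z W X g h => rfl, fun Z X Y k h => rfl⟩
end

section
/- Let Λ(n) denote untyped lambda terms with n free de Bruijn variables, quotiented by βη-equivalence, and let church k := λ s. λ z. sᵏ z be the k-th Church numeral. Then the function church : ℕ → Λ(0) is injective: if church j = church k modulo βη then j = k. -/
/-- Untyped lambda terms with `n` free de Bruijn variables. -/
inductive Tm : Nat → Type
  | var {n} : Fin n → Tm n
  | app {n} : Tm n → Tm n → Tm n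
  | lam {n} : Tm (n + 1) → Tm n

/-- Lifting a renaming under a binder. -/
def liftRen {n m : Nat} (ρ : Fin n → Fin m) : Fin (n + 1) → Fin (m + 1) :=
  Fin.cases 0 (fun i => (ρ i).succ)

/-- Renaming of terms. -/
def rename : {n m : Nat} → (Fin n → Fin m) → Tm n → Tm m
  | _, _, ρ, .var i => .var (ρ i)
  | _, _, ρ, .app t u => .app (rename ρ t) (rename ρ u)
  | _, _, ρ, .lam t => .lam (rename (liftRen ρ) t)

/-- Lifting a simultaneous substitution under a binder. -/
def liftSub {n m : Nat} (σ : Fin n → Tm m) : Fin (n + 1) → Tm (m + 1) :=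
  Fin.cases (.var 0) (fun i => rename Fin.succ (σ i))

/-- Simultaneous substitution. -/
def subst : {n m : Nat} → (Fin n → Tm m) → Tm n → Tm m
  | _, _, σ, .var i => σ i
  | _, _, σ, .app t u => .app (subst σ t) (subst σ u)
  | _, _, σ, .lam t => .lam (subst (liftSub σ) t)

/-- The single-term substitution `u · id`. -/
def sub1 {n : Nat} (u : Tm n) : Fin (n + 1) → Tm n :=
  Fin.cases u .var

/-- βη-conversion: the congruent equivalence generated by β- and η-reduction. -/
inductive Conv : {n : Nat} → Tm n → Tm n → Prop
  | refl {n} (t : Tm n) : Conv t t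
  | symm {n} {t u : Tm n} : Conv t u → Conv u t
  | trans {n} {t u v : Tm n} : Conv t u → Conv u v → Conv t v
  | appCong {n} {t t' u u' : Tm n} : Conv t t' → Conv u u' → Conv (.app t u) (.app t' u')
  | lamCong {n} {t t' : Tm (n + 1)} : Conv t t' → Conv (.lam t) (.lam t')
  | beta {n} (t : Tm (n + 1)) (u : Tm n) : Conv (.app (.lam t) u) (subst (sub1 u) t)
  | eta {n} (t : Tm n) : Conv (.lam (.app (rename Fin.succ t) (.var 0))) t

/-- The `k`-th Church numeral `λ s. λ z. sᵏ z`. -/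
def church (k : Nat) : Tm 0 :=
  .lam (.lam ((fun t => Tm.app (.var 1) t)^[k] (.var 0)))

-- ============ substitution calculus ============

theorem liftRen_zero {n m} (ρ : Fin n → Fin m) : liftRen ρ 0 = 0 := rfl
theorem liftRen_succ {n m} (ρ : Fin n → Fin m) (i : Fin n) :
    liftRen ρ i.succ = (ρ i).succ := by simp [liftRen]
theorem liftSub_zero {n m} (σ : Fin n → Tm m) : liftSub σ 0 = .var 0 := rfl
theorem liftSub_succ {n m} (σ : Fin n → Tm m) (i : Fin n) :
    liftSub σ i.succ = rename Fin.succ (σ i) := by simp [liftSub]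
theorem sub1_zero {n} (u : Tm n) : sub1 u 0 = u := rfl
theorem sub1_succ {n} (u : Tm n) (i : Fin n) : sub1 u i.succ = .var i := by simp [sub1]

theorem rename_ext {n m} {ρ ρ' : Fin n → Fin m} (h : ∀ i, ρ i = ρ' i) (t : Tm n) :
    rename ρ t = rename ρ' t := by
  induction t generalizing m with
  | var i => simp [rename, h]
  | app a b iha ihb => simp [rename, iha h, ihb h]
  | lam a ih =>
      simp only [rename]
      congr 1
      exact ih (fun i => by cases i using Fin.cases <;> simp [liftRen_zero, liftRen_succ, h])

theorem subst_ext {n m} {σ σ' : Fin n → Tm m} (h : ∀ i, σ i = σ' i) (t : Tm n) :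
    subst σ t = subst σ' t := by
  induction t generalizing m with
  | var i => simp [subst, h]
  | app a b iha ihb => simp [subst, iha h, ihb h]
  | lam a ih =>
      simp only [subst]
      congr 1
      exact ih (fun i => by cases i using Fin.cases <;> simp [liftSub_zero, liftSub_succ, h])

theorem rename_rename {n m p} (ρ₂ : Fin m → Fin p) (ρ₁ : Fin n → Fin m) (t : Tm n) :
    rename ρ₂ (rename ρ₁ t) = rename (fun i => ρ₂ (ρ₁ i)) t := by
  induction t generalizing m p with
  | var i => simp [rename]
  | app a b iha ihb => simp [rename, iha, ihb]
  | lam a ih =>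
      simp only [rename]
      congr 1
      rw [ih]
      exact rename_ext (fun i => by
        cases i using Fin.cases <;> simp [liftRen_zero, liftRen_succ]) a

theorem subst_rename {n m p} (σ : Fin m → Tm p) (ρ : Fin n → Fin m) (t : Tm n) :
    subst σ (rename ρ t) = subst (fun i => σ (ρ i)) t := by
  induction t generalizing m p with
  | var i => simp [rename, subst]
  | app a b iha ihb => simp [rename, subst, iha, ihb]
  | lam a ih =>
      simp only [rename, subst]
      congr 1
      rw [ih]
      exact subst_ext (fun i => by
        cases i using Fin.cases <;> simp [liftRen_zero, liftRen_succ, liftSub_zero, liftSub_succ]) a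

theorem rename_subst {n m p} (ρ : Fin m → Fin p) (σ : Fin n → Tm m) (t : Tm n) :
    rename ρ (subst σ t) = subst (fun i => rename ρ (σ i)) t := by
  induction t generalizing m p with
  | var i => simp [rename, subst]
  | app a b iha ihb => simp [rename, subst, iha, ihb]
  | lam a ih =>
      simp only [rename, subst]
      congr 1
      rw [ih]
      exact subst_ext (fun i => by
        cases i using Fin.cases with
        | zero => simp [liftSub_zero, rename, liftRen_zero]
        | succ j => simp [liftSub_succ, rename_rename, liftRen_succ]) a

theorem subst_subst {n m p} (σ₂ : Fin m → Tm p) (σ₁ : Fin n → Tm m) (t : Tm n) :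
    subst σ₂ (subst σ₁ t) = subst (fun i => subst σ₂ (σ₁ i)) t := by
  induction t generalizing m p with
  | var i => simp [subst]
  | app a b iha ihb => simp [subst, iha, ihb]
  | lam a ih =>
      simp only [subst]
      congr 1
      rw [ih]
      exact subst_ext (fun i => by
        cases i using Fin.cases with
        | zero => simp [liftSub_zero, subst]
        | succ j => simp [liftSub_succ, subst_rename, rename_subst]) a

theorem subst_var {n} (t : Tm n) : subst .var t = t := by
  induction t with
  | var i => simp [subst]
  | app a b iha ihb => simp [subst, iha, ihb]
  | lam a ih =>
      simp only [subst]
      congr 1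
      rw [subst_ext (σ' := Tm.var) (fun i => by
        cases i using Fin.cases <;> simp [liftSub_zero, liftSub_succ, rename]) a, ih]

/-- Lemma A: renaming commutes with β-substitution. -/
theorem rename_sub1 {n m} (ρ : Fin n → Fin m) (u : Tm n) (t : Tm (n + 1)) :
    rename ρ (subst (sub1 u) t) = subst (sub1 (rename ρ u)) (rename (liftRen ρ) t) := by
  rw [rename_subst, subst_rename]
  exact subst_ext (fun i => by
    cases i using Fin.cases <;> simp [sub1_zero, sub1_succ, liftRen_zero, liftRen_succ, rename]) t

/-- Lemma B: substitution commutes with β-substitution. -/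
theorem subst_sub1 {n m} (σ : Fin n → Tm m) (u : Tm n) (t : Tm (n + 1)) :
    subst σ (subst (sub1 u) t) = subst (sub1 (subst σ u)) (subst (liftSub σ) t) := by
  rw [subst_subst, subst_subst]
  exact subst_ext (fun i => by
    cases i using Fin.cases with
    | zero => simp [sub1_zero, liftSub_zero, subst]
    | succ j => simp [sub1_succ, liftSub_succ, subst, subst_rename, sub1, subst_var]) t

/-- β-substituting `var 0` after weakening below the binder is the identity. -/
theorem sub1_var0_rename {n} (t : Tm (n + 1)) :
    subst (sub1 (.var 0)) (rename (liftRen Fin.succ) t) = t := by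
  rw [subst_rename]
  rw [show (fun i => sub1 (Tm.var 0) (liftRen Fin.succ i)) = (Tm.var : Fin (n+1) → Tm (n+1)) from ?_]
  · exact subst_var t
  · funext i
    cases i using Fin.cases <;> simp [liftRen_zero, liftRen_succ, sub1_zero, sub1_succ]

/-- β-substituting into a weakened term is the identity. -/
theorem sub1_rename_succ {n} (u : Tm n) (t : Tm n) :
    subst (sub1 u) (rename Fin.succ t) = t := by
  rw [subst_rename]
  rw [show (fun i => sub1 u (Fin.succ i)) = (Tm.var : Fin n → Tm n) from ?_]
  · exact subst_var t
  · funext i; simp [sub1_succ]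

-- ============ size ============

def size : {n : Nat} → Tm n → Nat
  | _, .var _ => 0
  | _, .app t u => size t + size u + 1
  | _, .lam t => size t + 1

theorem size_rename {n m} (ρ : Fin n → Fin m) (t : Tm n) : size (rename ρ t) = size t := by
  induction t generalizing m with
  | var i => rfl
  | app a b iha ihb => simp [rename, size, iha, ihb]
  | lam a ih => simp [rename, size, ih]

-- ============ lowering (partial inverse of renaming) ============

def liftO {n m : Nat} (π : Fin n → Option (Fin m)) :
    Fin (n + 1) → Option (Fin (m + 1)) :=
  Fin.cases (some 0) (fun i => (π i).map Fin.succ)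

def lower : {n m : Nat} → (Fin n → Option (Fin m)) → Tm n → Option (Tm m)
  | _, _, π, .var i => (π i).map .var
  | _, _, π, .app t u => (lower π t).bind (fun t' => (lower π u).map (.app t'))
  | _, _, π, .lam t => (lower (liftO π) t).map .lam

def pred0 {n : Nat} : Fin (n + 1) → Option (Fin n) := Fin.cases none some

def unren {n : Nat} (t : Tm (n + 1)) : Option (Tm n) := lower pred0 t

theorem liftO_zero {n m} (π : Fin n → Option (Fin m)) : liftO π 0 = some 0 := rfl
theorem liftO_succ {n m} (π : Fin n → Option (Fin m)) (i : Fin n) :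
    liftO π i.succ = (π i).map Fin.succ := by simp [liftO]

/-- U1: lowering after the matching renaming recovers the term. -/
theorem lower_rename {n m} (π : Fin m → Option (Fin n)) (ρ : Fin n → Fin m)
    (hπρ : ∀ i, π (ρ i) = some i) (t : Tm n) : lower π (rename ρ t) = some t := by
  induction t generalizing m with
  | var i => simp [rename, lower, hπρ]
  | app a b iha ihb => simp [rename, lower, iha π ρ hπρ, ihb π ρ hπρ]
  | lam a ih =>
      simp only [rename, lower]
      rw [ih (liftO π) (liftRen ρ) (fun i => by
        cases i using Fin.cases <;> simp [liftRen_zero, liftRen_succ, liftO_zero, liftO_succ, hπρ])]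
      rfl

/-- U2: successful lowering means the term was a renaming. -/
theorem lower_eq_some {n m} (π : Fin m → Option (Fin n)) (ρ : Fin n → Fin m)
    (hρπ : ∀ i j, π i = some j → i = ρ j) (t : Tm m) (u : Tm n)
    (h : lower π t = some u) : t = rename ρ u := by
  induction t generalizing n u with
  | var i =>
      simp only [lower, Option.map_eq_some_iff] at h
      obtain ⟨j, hj, rfl⟩ := h
      simp [rename, hρπ i j hj]
  | app a b iha ihb =>
      simp only [lower, Option.bind_eq_some_iff, Option.map_eq_some_iff] at h
      obtain ⟨a', ha, b', hb, rfl⟩ := h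
      simp [rename, iha π ρ hρπ a' ha, ihb π ρ hρπ b' hb]
  | lam a ih =>
      simp only [lower, Option.map_eq_some_iff] at h
      obtain ⟨a', ha, rfl⟩ := h
      simp only [rename]
      rw [ih (liftO π) (liftRen ρ) (fun i j hij => by
        cases i using Fin.cases with
        | zero =>
            rw [liftO_zero] at hij
            cases hij
            rfl
        | succ i' =>
            rw [liftO_succ, Option.map_eq_some_iff] at hij
            obtain ⟨j', hj', rfl⟩ := hij
            rw [hρπ i' j' hj', liftRen_succ]) a' ha]

theorem unren_rename {n} (t : Tm n) : unren (rename Fin.succ t) = some t :=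
  lower_rename pred0 Fin.succ (fun i => by simp [pred0]) t

theorem unren_eq_some {n} (t : Tm (n + 1)) (u : Tm n) (h : unren t = some u) :
    t = rename Fin.succ u :=
  lower_eq_some pred0 Fin.succ (fun i j hij => by
    cases i using Fin.cases with
    | zero => simp [pred0] at hij
    | succ i' => simp [pred0] at hij; rw [hij]) t u h

/-- U3: lowering commutes with renamings. -/
theorem lower_rename_comm {n m n' m'} (π : Fin n' → Option (Fin n))
    (πm : Fin m' → Option (Fin m)) (ρ : Fin n → Fin m) (ρ' : Fin n' → Fin m')
    (hcomp : ∀ i, πm (ρ' i) = (π i).map ρ) (t : Tm n') :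
    lower πm (rename ρ' t) = (lower π t).map (rename ρ) := by
  induction t generalizing n m m' with
  | var i => simp [rename, lower, hcomp, Option.map_map]; rfl
  | app a b iha ihb =>
      simp only [rename, lower, iha π πm ρ ρ' hcomp, ihb π πm ρ ρ' hcomp]
      cases lower π a <;> cases lower π b <;> simp [rename]
  | lam a ih =>
      simp only [rename, lower]
      rw [ih (liftO π) (liftO πm) (liftRen ρ) (liftRen ρ') (fun i => by
        cases i using Fin.cases with
        | zero => simp [liftRen_zero, liftO_zero]
        | succ i' =>
            simp only [liftRen_succ, liftO_succ, hcomp, Option.map_map]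
            cases π i' <;> simp [liftRen_succ])]
      cases lower (liftO π) a <;> simp [rename]

theorem unren_rename_comm {n m} (ρ : Fin n → Fin m) (t : Tm (n + 1)) :
    unren (rename (liftRen ρ) t) = (unren t).map (rename ρ) :=
  lower_rename_comm pred0 pred0 ρ (liftRen ρ) (fun i => by
    cases i using Fin.cases <;> simp [liftRen_zero, liftRen_succ, pred0]) t

-- ============ parallel βη-reduction ============

inductive Par : {n : Nat} → Tm n → Tm n → Prop
  | var {n} (i : Fin n) : Par (.var i) (.var i)
  | app {n} {t t' u u' : Tm n} : Par t t' → Par u u' → Par (.app t u) (.app t' u')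
  | lam {n} {t t' : Tm (n + 1)} : Par t t' → Par (.lam t) (.lam t')
  | beta {n} {t t' : Tm (n + 1)} {u u' : Tm n} :
      Par t t' → Par u u' → Par (.app (.lam t) u) (subst (sub1 u') t')
  | eta {n} {t : Tm n} {t' : Tm n} :
      Par t t' → Par (.lam (.app (rename Fin.succ t) (.var 0))) t'

theorem Par.refl : ∀ {n} (t : Tm n), Par t t
  | _, .var i => .var i
  | _, .app t u => .app (Par.refl t) (Par.refl u)
  | _, .lam t => .lam (Par.refl t)

/-- Parallel reduction is closed under renaming. -/
theorem Par.rename_closed {n m} {t t' : Tm n} (ρ : Fin n → Fin m) (h : Par t t') :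
    Par (rename ρ t) (rename ρ t') := by
  induction h generalizing m with
  | var i => exact Par.refl _
  | app ht hu iht ihu => exact Par.app (iht ρ) (ihu ρ)
  | lam ht iht => exact Par.lam (iht (liftRen ρ))
  | @beta _ a a' b b' ha hb iha ihb =>
      simp only [rename]
      rw [rename_sub1]
      exact Par.beta (iha (liftRen ρ)) (ihb ρ)
  | @eta _ a a' ha iha =>
      simp only [rename]
      have e1 : rename (liftRen ρ) (rename Fin.succ a) = rename Fin.succ (rename ρ a) := by
        rw [rename_rename, rename_rename]
        exact rename_ext (fun i => by simp [liftRen_succ]) a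
      rw [e1, liftRen_zero]
      exact Par.eta (iha ρ)

/-- Parallel reduction is closed under substitution (both in the term and the substitution). -/
theorem Par.subst_closed {n m} {t t' : Tm n} {σ σ' : Fin n → Tm m}
    (hσ : ∀ i, Par (σ i) (σ' i)) (h : Par t t') :
    Par (subst σ t) (subst σ' t') := by
  induction h generalizing m with
  | var i => exact hσ i
  | app ht hu iht ihu => exact Par.app (iht hσ) (ihu hσ)
  | lam ht iht =>
      exact Par.lam (iht (fun i => by
        cases i using Fin.cases with
        | zero => exact Par.refl _
        | succ j => exact Par.rename_closed Fin.succ (hσ j)))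
  | @beta _ a a' b b' ha hb iha ihb =>
      simp only [subst]
      rw [subst_sub1]
      refine Par.beta (iha (fun i => ?_)) (ihb hσ)
      cases i using Fin.cases with
      | zero => exact Par.refl _
      | succ j => exact Par.rename_closed Fin.succ (hσ j)
  | @eta _ a a' ha iha =>
      simp only [subst]
      have e1 : subst (liftSub σ) (rename Fin.succ a) = rename Fin.succ (subst σ a) := by
        rw [subst_rename, rename_subst]
        exact subst_ext (fun i => by simp [liftSub_succ]) a
      rw [e1, liftSub_zero]
      exact Par.eta (iha hσ)

theorem Par.sub1_closed {n} {t t' : Tm (n + 1)} {u u' : Tm n}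
    (ht : Par t t') (hu : Par u u') : Par (subst (sub1 u) t) (subst (sub1 u') t') :=
  Par.subst_closed (fun i => by
    cases i using Fin.cases with
    | zero => exact hu
    | succ j => exact Par.refl _) ht

-- inversion lemmas
theorem par_var_inv {n} {i : Fin n} {s : Tm n} (h : Par (.var i) s) : s = .var i := by
  cases h; rfl

theorem par_app_inv {n} {f u s : Tm n} (h : Par (.app f u) s) :
    (∃ f' u', s = .app f' u' ∧ Par f f' ∧ Par u u') ∨
    (∃ v v' u', f = .lam v ∧ s = subst (sub1 u') v' ∧ Par v v' ∧ Par u u') := by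
  cases h with
  | app hf hu => exact Or.inl ⟨_, _, rfl, hf, hu⟩
  | beta hv hu => exact Or.inr ⟨_, _, _, rfl, rfl, hv, hu⟩

theorem par_lam_inv {n} {v : Tm (n + 1)} {s : Tm n} (h : Par (.lam v) s) :
    (∃ v', s = .lam v' ∧ Par v v') ∨
    (∃ w, v = .app (rename Fin.succ w) (.var 0) ∧ Par w s) := by
  cases h with
  | lam hv => exact Or.inl ⟨_, rfl, hv⟩
  | eta hw => exact Or.inr ⟨_, rfl, hw⟩

/-- Anti-renaming: parallel reduction from a renamed term stays in the image of the renaming. -/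
theorem par_rename_inv {n m : Nat} (ρ : Fin n → Fin m) (t : Tm n) (s : Tm m)
    (h : Par (rename ρ t) s) : ∃ t', s = rename ρ t' ∧ Par t t' := by
  match t with
  | .var i =>
      rw [show rename ρ (.var i) = .var (ρ i) from rfl] at h
      exact ⟨.var i, par_var_inv h, Par.var i⟩
  | .app f u =>
      rw [show rename ρ (.app f u) = .app (rename ρ f) (rename ρ u) from rfl] at h
      rcases par_app_inv h with ⟨F, U, rfl, hF, hU⟩ | ⟨v, v', u', heq, rfl, hv, hu⟩
      · obtain ⟨f', rfl, hf'⟩ := par_rename_inv ρ f F hF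
        obtain ⟨u'', rfl, hu'⟩ := par_rename_inv ρ u U hU
        exact ⟨.app f' u'', rfl, Par.app hf' hu'⟩
      · obtain ⟨f₀, rfl⟩ : ∃ f₀, f = .lam f₀ := by
          cases f with
          | var i => simp [rename] at heq
          | app c d => simp [rename] at heq
          | lam f₀ => exact ⟨f₀, rfl⟩
        simp only [rename, Tm.lam.injEq] at heq
        subst heq
        obtain ⟨f₀', rfl, hf₀'⟩ := par_rename_inv (liftRen ρ) f₀ v' hv
        obtain ⟨u₀', rfl, hu₀'⟩ := par_rename_inv ρ u u' hu
        refine ⟨subst (sub1 u₀') f₀', ?_, Par.beta hf₀' hu₀'⟩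
        rw [rename_sub1]
  | .lam t₀ =>
      rw [show rename ρ (.lam t₀) = .lam (rename (liftRen ρ) t₀) from rfl] at h
      rcases par_lam_inv h with ⟨v', rfl, hv⟩ | ⟨w, heq, hw⟩
      · obtain ⟨t₀', rfl, ht₀'⟩ := par_rename_inv (liftRen ρ) t₀ v' hv
        exact ⟨.lam t₀', rfl, Par.lam ht₀'⟩
      · obtain ⟨a, b, rfl⟩ : ∃ a b, t₀ = .app a b := by
          cases t₀ with
          | var i => simp [rename] at heq
          | lam c => simp [rename] at heq
          | app a b => exact ⟨a, b, rfl⟩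
        simp only [rename, Tm.app.injEq] at heq
        obtain ⟨ha, hb⟩ := heq
        have hb0 : b = .var 0 := by
          cases b with
          | app c d => simp [rename] at hb
          | lam c => simp [rename] at hb
          | var i =>
              simp only [rename, Tm.var.injEq] at hb
              cases i using Fin.cases with
              | zero => rfl
              | succ j =>
                  rw [liftRen_succ] at hb
                  exact absurd hb (Fin.succ_ne_zero _)
        subst hb0
        have hcomm := unren_rename_comm ρ a
        rw [ha, unren_rename] at hcomm
        obtain ⟨a₀, ha₀, hwa₀⟩ : ∃ a₀, unren a = some a₀ ∧ rename ρ a₀ = w := by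
          cases hu : unren a with
          | none => rw [hu] at hcomm; simp at hcomm
          | some a₀ =>
              rw [hu] at hcomm
              simp only [Option.map_some] at hcomm
              exact ⟨a₀, rfl, (Option.some_injective _ hcomm).symm⟩
        have haeq : a = rename Fin.succ a₀ := unren_eq_some a a₀ ha₀
        subst haeq
        rw [← hwa₀] at hw
        obtain ⟨s₀, rfl, hs₀⟩ := par_rename_inv ρ a₀ s hw
        exact ⟨s₀, rfl, Par.eta hs₀⟩
termination_by size t
decreasing_by
  all_goals subst_vars
  all_goals simp only [size, size_rename]
  all_goals omega

-- ============ complete development ============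

/-- Detects an η-redex body: `app (rename succ w) (var 0)` returns `some w`. -/
def etaBody : {n : Nat} → Tm (n + 1) → Option (Tm n)
  | _, .app a (.var i) => if i = 0 then unren a else none
  | _, _ => none

theorem etaBody_eq_some {n} {v : Tm (n + 1)} {w : Tm n} (h : etaBody v = some w) :
    v = .app (rename Fin.succ w) (.var 0) := by
  match v, h with
  | .app a (.var i), h =>
      simp only [etaBody] at h
      split at h
      · next hi =>
          subst hi
          rw [unren_eq_some a w h]
      · simp at h

theorem etaBody_redex {n} (w : Tm n) :
    etaBody (.app (rename Fin.succ w) (.var 0)) = some w := by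
  simp [etaBody, unren_rename]

theorem etaBody_rename_comm {n m} (ρ : Fin n → Fin m) (v : Tm (n + 1)) :
    etaBody (rename (liftRen ρ) v) = (etaBody v).map (rename ρ) := by
  match v with
  | .var i => simp [rename, etaBody]
  | .lam a => simp [rename, etaBody]
  | .app a (.var i) =>
      show etaBody (.app (rename (liftRen ρ) a) (.var (liftRen ρ i))) = _
      simp only [etaBody]
      by_cases hi : i = 0
      · subst hi
        rw [liftRen_zero]
        simp only [if_pos rfl]
        exact unren_rename_comm ρ a
      · have h2 : liftRen ρ i ≠ 0 := by
          cases i using Fin.cases with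
          | zero => exact absurd rfl hi
          | succ j => rw [liftRen_succ]; exact Fin.succ_ne_zero _
        rw [if_neg hi, if_neg h2]
        rfl
  | .app a (.app c d) => simp [rename, etaBody]
  | .app a (.lam c) => simp [rename, etaBody]

/-- The complete development (Takahashi's `t*`) for βη. -/
def cd : {n : Nat} → Tm n → Tm n
  | _, .var i => .var i
  | _, .app (.lam v) u => subst (sub1 (cd u)) (cd v)
  | _, .app (.var i) u => .app (.var i) (cd u)
  | _, .app (.app c d) u => .app (cd (.app c d)) (cd u)
  | _, .lam v =>
      match h : etaBody v with
      | some w => cd w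
      | none => .lam (cd v)
termination_by _ t => size t
decreasing_by
  all_goals simp only [size]
  all_goals try omega
  all_goals try (have h2 := etaBody_eq_some h; subst h2; simp only [size, size_rename]; omega)
  all_goals simp [size]

theorem cd_var {n} (i : Fin n) : cd (.var i) = .var i := by simp [cd]
theorem cd_app_lam {n} (v : Tm (n + 1)) (u : Tm n) :
    cd (.app (.lam v) u) = subst (sub1 (cd u)) (cd v) := by simp [cd]
theorem cd_app_var {n} (i : Fin n) (u : Tm n) :
    cd (.app (.var i) u) = .app (.var i) (cd u) := by simp [cd]
theorem cd_app_app {n} (c d u : Tm n) :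
    cd (.app (.app c d) u) = .app (cd (.app c d)) (cd u) := by
  rw [cd]
theorem cd_lam_eta' {n} {v : Tm (n + 1)} {w : Tm n} (h : etaBody v = some w) :
    cd (.lam v) = cd w := by
  rw [cd, h]
theorem cd_lam_eta {n} (w : Tm n) :
    cd (.lam (.app (rename Fin.succ w) (.var 0))) = cd w :=
  cd_lam_eta' (etaBody_redex w)
theorem cd_lam_ne {n} {v : Tm (n + 1)} (h : etaBody v = none) :
    cd (.lam v) = .lam (cd v) := by
  rw [cd, h]

theorem cd_app_ne {n} {f : Tm n} (hf : ∀ v, f ≠ .lam v) (u : Tm n) :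
    cd (.app f u) = .app (cd f) (cd u) := by
  cases f with
  | var i => rw [cd_app_var, cd_var]
  | app c d => rw [cd_app_app]
  | lam v => exact absurd rfl (hf v)

/-- Complete development commutes with renaming. -/
theorem cd_rename {n m : Nat} (ρ : Fin n → Fin m) (t : Tm n) :
    cd (rename ρ t) = rename ρ (cd t) := by
  match t with
  | .var i =>
      rw [show rename ρ (.var i) = Tm.var (ρ i) from rfl, cd_var, cd_var]
      rfl
  | .app (.lam v) u =>
      rw [show rename ρ (.app (.lam v) u)
            = .app (.lam (rename (liftRen ρ) v)) (rename ρ u) from rfl,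
          cd_app_lam, cd_app_lam, cd_rename (liftRen ρ) v, cd_rename ρ u, rename_sub1]
  | .app (.var i) u =>
      rw [show rename ρ (.app (.var i) u) = .app (.var (ρ i)) (rename ρ u) from rfl,
          cd_app_var, cd_app_var, cd_rename ρ u]
      rfl
  | .app (.app c d) u =>
      rw [show rename ρ (.app (.app c d) u)
            = .app (.app (rename ρ c) (rename ρ d)) (rename ρ u) from rfl,
          cd_app_app, cd_app_app]
      rw [show (rename ρ ((cd (Tm.app c d)).app (cd u)))
            = .app (rename ρ (cd (.app c d))) (rename ρ (cd u)) from rfl,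
          ← cd_rename ρ (Tm.app c d), ← cd_rename ρ u]
      rfl
  | .lam v =>
      rw [show rename ρ (.lam v) = .lam (rename (liftRen ρ) v) from rfl]
      cases h : etaBody v with
      | some w =>
          have h2 : etaBody (rename (liftRen ρ) v) = some (rename ρ w) := by
            rw [etaBody_rename_comm, h]; rfl
          rw [cd_lam_eta' h2, cd_lam_eta' h, cd_rename ρ w]
      | none =>
          have h2 : etaBody (rename (liftRen ρ) v) = none := by
            rw [etaBody_rename_comm, h]; rfl
          rw [cd_lam_ne h2, cd_lam_ne h, cd_rename (liftRen ρ) v]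
          rfl
termination_by size t
decreasing_by
  all_goals subst_vars
  all_goals simp only [size, size_rename]
  all_goals try omega
  · have := etaBody_eq_some h
    subst this
    simp only [size, size_rename]
    omega

-- ============ Takahashi's triangle property ============

theorem cd_eta_app_ne {n : Nat} {x : Tm n} (hx : ∀ v, x ≠ .lam v) (c : Tm n) :
    subst (sub1 c) (cd (.app (rename Fin.succ x) (.var 0))) = .app (cd x) c := by
  have hne : ∀ v, rename Fin.succ x ≠ .lam v := by
    intro v hv
    cases x with
    | var i => simp [rename] at hv
    | app a b => simp [rename] at hv
    | lam a => exact hx a rfl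
  rw [cd_app_ne hne, cd_var, cd_rename]
  show Tm.app (subst (sub1 c) (rename Fin.succ (cd x))) (sub1 c 0) = _
  rw [sub1_rename_succ, sub1_zero]

theorem cd_eta_app_lam {n : Nat} (x₀ : Tm (n + 1)) :
    cd (.app (rename Fin.succ (.lam x₀)) (.var 0)) = cd x₀ := by
  rw [show rename Fin.succ (Tm.lam x₀) = .lam (rename (liftRen Fin.succ) x₀) from rfl,
      cd_app_lam, cd_var, cd_rename, sub1_var0_rename]

/-- Auxiliary triangle lemma for η-redex function positions. -/
theorem par_triangle_aux {n : Nat} (x : Tm n)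
    (htri : ∀ (p : Nat) (y : Tm p), size y ≤ size x → ∀ s, Par y s → Par s (cd y))
    (f u₁ c : Tm n) (hf : Par x f) (hu : Par u₁ c) :
    Par (.app f u₁) (subst (sub1 c) (cd (.app (rename Fin.succ x) (.var 0)))) := by
  match x with
  | .var i =>
      rw [cd_eta_app_ne (by intro v hv; cases hv)]
      exact Par.app (htri _ _ le_rfl _ hf) hu
  | .app a b =>
      rw [cd_eta_app_ne (by intro v hv; cases hv)]
      exact Par.app (htri _ _ le_rfl _ hf) hu
  | .lam x₀ =>
      rw [cd_eta_app_lam]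
      rcases par_lam_inv hf with ⟨x₁, rfl, hx₁⟩ | ⟨y, heq, hy⟩
      · exact Par.beta (htri _ x₀ (by simp [size]) _ hx₁) hu
      · subst heq
        exact par_triangle_aux y
          (fun p z hz s hs => htri p z (by simp [size, size_rename] at *; omega) s hs)
          f u₁ c hy hu
termination_by size x
decreasing_by
  subst_vars
  simp only [size, size_rename]
  omega

/-- Takahashi's triangle property for parallel βη-reduction. -/
theorem par_triangle {n : Nat} (t s : Tm n) (h : Par t s) : Par s (cd t) := by
  match t with
  | .var i =>
      rw [par_var_inv h, cd_var]
      exact Par.var i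
  | .app (.var i) u =>
      rcases par_app_inv h with ⟨f', u', rfl, hf, hu⟩ | ⟨v, v', u', heq, rfl, hv, hu⟩
      · rw [par_var_inv hf, cd_app_var]
        exact Par.app (Par.var i) (par_triangle u u' hu)
      · cases heq
  | .app (.app a b) u =>
      rcases par_app_inv h with ⟨f', u', rfl, hf, hu⟩ | ⟨v, v', u', heq, rfl, hv, hu⟩
      · rw [cd_app_app]
        exact Par.app (par_triangle (.app a b) f' hf) (par_triangle u u' hu)
      · cases heq
  | .app (.lam v) u =>
      rw [cd_app_lam]
      rcases par_app_inv h with ⟨f', u', rfl, hf, hu⟩ | ⟨v₀, v', u', heq, rfl, hv, hu⟩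
      · rcases par_lam_inv hf with ⟨v', rfl, hv⟩ | ⟨w, heq, hw⟩
        · exact Par.beta (par_triangle v v' hv) (par_triangle u u' hu)
        · subst heq
          exact par_triangle_aux w
            (fun p z hz s hs => par_triangle z s hs)
            f' u' (cd u) hw (par_triangle u u' hu)
      · have hveq : v = v₀ := by simp only [Tm.lam.injEq] at heq; exact heq
        subst hveq
        exact Par.sub1_closed (par_triangle v v' hv) (par_triangle u u' hu)
  | .lam v =>
      rcases par_lam_inv h with ⟨v', rfl, hv⟩ | ⟨w, heq, hw⟩
      · cases hc : etaBody v with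
        | some w =>
            rw [cd_lam_eta' hc]
            have hveq := etaBody_eq_some hc
            subst hveq
            rcases par_app_inv hv with ⟨A, B, rfl, hA, hB⟩ | ⟨L, L', b', heqL, rfl, hL, hb⟩
            · rw [par_var_inv hB]
              obtain ⟨w', rfl, hw'⟩ := par_rename_inv Fin.succ w A hA
              exact Par.eta (par_triangle w w' hw')
            · obtain ⟨w₀, rfl⟩ : ∃ w₀, w = .lam w₀ := by
                cases w with
                | var i => simp [rename] at heqL
                | app a b => simp [rename] at heqL
                | lam w₀ => exact ⟨w₀, rfl⟩
              have hLeq : L = rename (liftRen Fin.succ) w₀ := by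
                rw [show rename Fin.succ (Tm.lam w₀)
                      = .lam (rename (liftRen Fin.succ) w₀) from rfl] at heqL
                simp only [Tm.lam.injEq] at heqL
                exact heqL.symm
              subst hLeq
              rw [par_var_inv hb]
              obtain ⟨w₁, rfl, hw₁⟩ := par_rename_inv (liftRen Fin.succ) w₀ L' hL
              rw [sub1_var0_rename]
              exact par_triangle (.lam w₀) (.lam w₁) (Par.lam hw₁)
        | none =>
            rw [cd_lam_ne hc]
            exact Par.lam (par_triangle v v' hv)
      · subst heq
        rw [cd_lam_eta]
        exact par_triangle w s hw
termination_by size t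
decreasing_by
  all_goals subst_vars
  all_goals simp only [size, size_rename]
  all_goals omega

/-- The diamond property for parallel βη-reduction. -/
theorem par_diamond {n : Nat} {t s₁ s₂ : Tm n} (h₁ : Par t s₁) (h₂ : Par t s₂) :
    ∃ u, Par s₁ u ∧ Par s₂ u :=
  ⟨cd t, par_triangle t s₁ h₁, par_triangle t s₂ h₂⟩

-- ============ from conversion to joinability ============

theorem rtg_app {n} {t t' u u' : Tm n}
    (ht : Relation.ReflTransGen Par t t') (hu : Relation.ReflTransGen Par u u') :
    Relation.ReflTransGen Par (.app t u) (.app t' u') := by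
  have h1 : Relation.ReflTransGen Par (Tm.app t u) (.app t' u) :=
    Relation.ReflTransGen.lift (fun x => Tm.app x u) (fun a b hab => Par.app hab (Par.refl u)) _ _ ht
  have h2 : Relation.ReflTransGen Par (Tm.app t' u) (.app t' u') :=
    Relation.ReflTransGen.lift (fun x => Tm.app t' x) (fun a b hab => Par.app (Par.refl t') hab) _ _ hu
  exact h1.trans h2

theorem rtg_lam {n} {t t' : Tm (n + 1)} (ht : Relation.ReflTransGen Par t t') :
    Relation.ReflTransGen Par (.lam t) (.lam t') :=
  Relation.ReflTransGen.lift Tm.lam (fun a b hab => Par.lam hab) _ _ ht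

theorem join_equiv (n : Nat) : Equivalence (Relation.Join (Relation.ReflTransGen (@Par n))) :=
  Relation.equivalence_join_reflTransGen (fun a b c h₁ h₂ => by
    obtain ⟨d, hd₁, hd₂⟩ := par_diamond h₁ h₂
    exact ⟨d, Relation.ReflGen.single hd₁, Relation.ReflTransGen.single hd₂⟩)

theorem conv_join {n} {t u : Tm n} (h : Conv t u) :
    Relation.Join (Relation.ReflTransGen (@Par n)) t u := by
  induction h with
  | refl t => exact (join_equiv _).refl t
  | symm _ ih => exact (join_equiv _).symm ih
  | trans _ _ ih₁ ih₂ => exact (join_equiv _).trans ih₁ ih₂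
  | appCong _ _ ih₁ ih₂ =>
      obtain ⟨c₁, h1, h2⟩ := ih₁
      obtain ⟨c₂, h3, h4⟩ := ih₂
      exact ⟨.app c₁ c₂, rtg_app h1 h3, rtg_app h2 h4⟩
  | lamCong _ ih =>
      obtain ⟨c, h1, h2⟩ := ih
      exact ⟨.lam c, rtg_lam h1, rtg_lam h2⟩
  | beta t u =>
      exact ⟨_, Relation.ReflTransGen.single (Par.beta (Par.refl t) (Par.refl u)),
        Relation.ReflTransGen.refl⟩
  | eta t =>
      exact ⟨_, Relation.ReflTransGen.single (Par.eta (Par.refl t)),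
        Relation.ReflTransGen.refl⟩

-- ============ Church numerals ============

def cbody (k : Nat) : Tm 2 := (fun t => Tm.app (.var 1) t)^[k] (.var 0)

theorem cbody_zero : cbody 0 = .var 0 := rfl
theorem cbody_succ (k : Nat) : cbody (k + 1) = .app (.var 1) (cbody k) := by
  simp [cbody, Function.iterate_succ_apply']

theorem par_cbody {k : Nat} {s : Tm 2} (h : Par (cbody k) s) : s = cbody k := by
  induction k generalizing s with
  | zero => rw [cbody_zero] at h ⊢; exact par_var_inv h
  | succ k ih =>
      rw [cbody_succ] at h ⊢
      rcases par_app_inv h with ⟨f', u', rfl, hf, hu⟩ | ⟨v, v', u', heq, rfl, hv, hu⟩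
      · rw [par_var_inv hf, ih hu]
      · cases heq

theorem par_id_reduct {s : Tm 0} (h : Par (.lam (.var 0)) s) : s = .lam (.var 0) := by
  rcases par_lam_inv h with ⟨v', rfl, hv⟩ | ⟨w, heq, hw⟩
  · rw [par_var_inv hv]
  · cases heq

theorem church_eq_lam (k : Nat) : church k = .lam (.lam (cbody k)) := rfl

theorem par_church {k : Nat} {s : Tm 0} (h : Par (church k) s) :
    s = church k ∨ (k = 1 ∧ s = .lam (.var 0)) := by
  rw [church_eq_lam] at h
  rcases par_lam_inv h with ⟨v', rfl, hv⟩ | ⟨w, heq, hw⟩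
  · rcases par_lam_inv hv with ⟨b', rfl, hb⟩ | ⟨w, heq, hw⟩
    · left; rw [par_cbody hb, church_eq_lam]
    · -- cbody k is an η-redex body: forces k = 1
      match k, heq with
      | 0, heq => rw [cbody_zero] at heq; cases heq
      | k' + 1, heq =>
          rw [cbody_succ] at heq
          injection heq with hn h1 h2
          have hk : k' = 0 := by
            cases k' with
            | zero => rfl
            | succ k'' => rw [cbody_succ] at h2; cases h2
          subst hk
          have hw0 : w = .var 0 := by
            cases w with
            | var j => exact congrArg Tm.var (Fin.ext (by have := j.isLt; omega))
            | app a b => simp [rename] at h1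
            | lam a => simp [rename] at h1
          subst hw0
          right
          exact ⟨rfl, by rw [par_var_inv hw]⟩
  · cases heq

theorem rtg_church {k : Nat} {s : Tm 0} (h : Relation.ReflTransGen Par (church k) s) :
    s = church k ∨ (k = 1 ∧ s = .lam (.var 0)) := by
  induction h with
  | refl => left; rfl
  | tail _ hp ih =>
      rcases ih with rfl | ⟨hk, rfl⟩
      · exact par_church hp
      · exact Or.inr ⟨hk, par_id_reduct hp⟩

theorem cbody_inj {j k : Nat} (h : cbody j = cbody k) : j = k := by
  induction j generalizing k with
  | zero =>
      cases k with
      | zero => rfl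
      | succ k => rw [cbody_zero, cbody_succ] at h; cases h
  | succ j ih =>
      cases k with
      | zero => rw [cbody_zero, cbody_succ] at h; cases h
      | succ k =>
          rw [cbody_succ, cbody_succ] at h
          injection h with hn h1 h2
          rw [ih h2]

theorem church_inj {j k : Nat} (h : church j = church k) : j = k := by
  rw [church_eq_lam, church_eq_lam] at h
  injection h with hn h1
  injection h1 with hn2 h2
  exact cbody_inj h2

theorem church_ne_id (j : Nat) : church j ≠ .lam (.var 0) := by
  rw [church_eq_lam]
  intro h
  injection h with hn h1
  simp at h1

/-- Church numerals are injective modulo βη-conversion. -/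
theorem church_injective (j k : Nat) (h : Conv (church j) (church k)) : j = k := by
  obtain ⟨c, h1, h2⟩ := conv_join h
  rcases rtg_church h1 with rfl | ⟨hj, rfl⟩
  · rcases rtg_church h2 with hc | ⟨hk, hc⟩
    · exact church_inj hc
    · exact absurd hc (church_ne_id j)
  · rcases rtg_church h2 with hc | ⟨hk, _⟩
    · exact absurd hc.symm (church_ne_id k)
    · omega
end
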